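/- Monoentropic systems with closed pure-state sets are sharp: let 𝔄 be a test space with finite outcome space X, and let Ω ⊂ [0,1]^X be a compact convex set of states on 𝔄 such that the set of extreme points of Ω is closed, for every α ∈ Ω the infimum defining the measurement entropy is attained on some test, and H(α) = S(α) for every α ∈ Ω (monoentropicity). Then: (i) every extreme point α of Ω assigns probability 1 to some outcome x ∈ X; and (ii) for every outcome x ∈ X there is at most one state α ∈ Ω with α(x) = 1, and any such state is an extreme point of Ω. -/

import Mathlib

/-- Local measurement entropy of a state `α` at a test `E` (base-2 logarithm). -/
noncomputable def locEnt {X : Type*} (E : Finset X) (α : X → ℝ) : ℝ :=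
  ∑ x ∈ E, -(α x * Real.logb 2 (α x))

/-- Measurement entropy: infimum of local entropies over all tests of the test space. -/
noncomputable def measEnt {X : Type*} (𝔄 : Set (Finset X)) (α : X → ℝ) : ℝ :=
  sInf ((fun E => locEnt E α) '' 𝔄)

/-- A state on a test space: nonnegative on outcomes, summing to 1 on every test. -/
def IsState {X : Type*} (𝔄 : Set (Finset X)) (α : X → ℝ) : Prop :=
  (∀ E ∈ 𝔄, ∀ x ∈ E, 0 ≤ α x) ∧ (∀ E ∈ 𝔄, ∑ x ∈ E, α x = 1)

/-- Shannon entropy (base 2) of a finite probability vector. -/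
noncomputable def shannon {n : ℕ} (p : Fin n → ℝ) : ℝ :=
  ∑ i, -(p i * Real.logb 2 (p i))

/-- Mixing (preparation) entropy of a point `ω` of a convex set `Ω`:
the infimum of the Shannon entropies of the coefficients over all finite
convex decompositions of `ω` into extreme points of `Ω`. -/
noncomputable def mixEnt {V : Type*} [AddCommGroup V] [Module ℝ V]
    (Ω : Set V) (ω : V) : ℝ :=
  sInf {h : ℝ | ∃ (n : ℕ) (p : Fin n → ℝ) (v : Fin n → V),
    (∀ i, 0 ≤ p i) ∧ (∑ i, p i = 1) ∧ (∀ i, v i ∈ Ω.extremePoints ℝ) ∧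
    ω = ∑ i, p i • v i ∧ h = shannon p}

/- ### Auxiliary lemmas -/

private lemma ent_term_nonneg {t : ℝ} (h0 : 0 ≤ t) (h1 : t ≤ 1) :
    0 ≤ -(t * Real.logb 2 t) := by
  have h := Real.logb_nonpos (b := 2) one_lt_two h0 h1
  nlinarith

private lemma ent_term_eq_zero {t : ℝ} (h0 : 0 ≤ t) (hz : t * Real.logb 2 t = 0) :
    t = 0 ∨ t = 1 := by
  rcases mul_eq_zero.mp hz with h | h
  · exact Or.inl h
  · rcases Real.logb_eq_zero.mp h with h' | h' | h' | h' | h' | h'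
    · norm_num at h'
    · norm_num at h'
    · norm_num at h'
    · exact Or.inl h'
    · exact Or.inr h'
    · exfalso; rw [h'] at h0; norm_num at h0

private lemma shannon_nonneg {n : ℕ} {p : Fin n → ℝ} (h0 : ∀ i, 0 ≤ p i)
    (h1 : ∑ i, p i = 1) : 0 ≤ shannon p := by
  apply Finset.sum_nonneg
  intro i _
  exact ent_term_nonneg (h0 i)
    (h1 ▸ Finset.single_le_sum (fun j _ => h0 j) (Finset.mem_univ i))

private lemma exists_big_weight {n : ℕ} {p : Fin n → ℝ} (h0 : ∀ i, 0 ≤ p i)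
    (h1 : ∑ i, p i = 1) {ε : ℝ} (hε : 0 < ε) (hs : shannon p < ε) :
    ∃ j, 1 - ε ≤ p j := by
  have hn : n ≠ 0 := by rintro rfl; simp at h1
  obtain ⟨j, -, hj⟩ := Finset.exists_max_image (Finset.univ : Finset (Fin n)) p
    ⟨⟨0, Nat.pos_of_ne_zero hn⟩, Finset.mem_univ _⟩
  have hjmax : ∀ i, p i ≤ p j := fun i => hj i (Finset.mem_univ i)
  have hjpos : 0 < p j := by
    by_contra hle
    push_neg at hle
    have : ∑ i, p i = 0 := Finset.sum_eq_zero fun i _ =>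
      le_antisymm (le_trans (hjmax i) hle) (h0 i)
    rw [h1] at this; norm_num at this
  refine ⟨j, ?_⟩
  -- shannon p ≥ -logb 2 (p j)
  have key : -(Real.logb 2 (p j)) ≤ shannon p := by
    have step : ∑ i, -(p i * Real.logb 2 (p j)) ≤ shannon p := by
      apply Finset.sum_le_sum
      intro i _
      rcases (h0 i).eq_or_lt' with h' | h'
      · simp [h']
      · have hlog : Real.logb 2 (p i) ≤ Real.logb 2 (p j) :=
          Real.logb_le_logb_of_le one_lt_two h' (hjmax i)
        have := mul_le_mul_of_nonneg_left hlog (h0 i)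
        linarith
    have hsum_eq : ∑ i, -(p i * Real.logb 2 (p j)) = -(Real.logb 2 (p j)) := by
      rw [Finset.sum_neg_distrib, ← Finset.sum_mul, h1, one_mul]
    linarith [step, hsum_eq]
  have hlogb : -ε < Real.logb 2 (p j) := by linarith
  have hrpow : (2 : ℝ) ^ (-ε) ≤ p j := by
    have h2 : (2 : ℝ) ^ Real.logb 2 (p j) = p j :=
      Real.rpow_logb (by norm_num) (by norm_num) hjpos
    calc (2 : ℝ) ^ (-ε) ≤ (2 : ℝ) ^ Real.logb 2 (p j) :=
          (Real.rpow_le_rpow_left_iff (by norm_num)).mpr hlogb.le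
      _ = p j := h2
  -- 2 ^ (-ε) ≥ 1 - ε
  have hexp : 1 - ε ≤ (2 : ℝ) ^ (-ε) := by
    rw [Real.rpow_def_of_pos (by norm_num : (0:ℝ) < 2)]
    have h1' := Real.add_one_le_exp (Real.log 2 * -ε)
    have hlog2 : Real.log 2 ≤ 1 := by
      have := Real.log_le_sub_one_of_pos (by norm_num : (0:ℝ) < 2)
      linarith
    have hlog2' : 0 < Real.log 2 := Real.log_pos (by norm_num)
    nlinarith
  linarith

private lemma sum_extend_eq {ι : Type*} [Fintype ι] {n : ℕ} {e : ι → Fin n}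
    (he : Function.Injective e) {M : Type*} [AddCommMonoid M] (F : Fin n → M)
    (hF : ∀ j, (¬∃ i, e i = j) → F j = 0) : ∑ j, F j = ∑ i, F (e i) := by
  classical
  rw [← Finset.sum_image (fun i _ j _ h => he h)]
  refine (Finset.sum_subset (Finset.subset_univ _) ?_).symm
  intro j _ hj
  refine hF j fun h => ?_
  obtain ⟨i, hi⟩ := h
  exact hj (Finset.mem_image.mpr ⟨i, Finset.mem_univ i, hi⟩)

/-- In a finite-dimensional space `X → ℝ`, the convex hull of a compact set is
compact, and every point of it is a finite convex combination of points of the set. -/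
private lemma convexHull_compact_rep {X : Type*} [Fintype X] (K : Set (X → ℝ))
    (hK : IsCompact K) :
    IsCompact (convexHull ℝ K) ∧
      ∀ γ ∈ convexHull ℝ K, ∃ (n : ℕ) (p : Fin n → ℝ) (v : Fin n → (X → ℝ)),
        (∀ i, 0 ≤ p i) ∧ (∑ i, p i = 1) ∧ (∀ i, v i ∈ K) ∧ γ = ∑ i, p i • v i := by
  classical
  rcases K.eq_empty_or_nonempty with rfl | ⟨k0, hk0⟩
  · simpa using isCompact_empty
  set n := Fintype.card X + 1 with hn
  set f : (Fin n → ℝ) × (Fin n → (X → ℝ)) → (X → ℝ) := fun wz => ∑ i, wz.1 i • wz.2 i with hf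
  set S : Set ((Fin n → ℝ) × (Fin n → (X → ℝ))) :=
    (stdSimplex ℝ (Fin n)) ×ˢ Set.univ.pi (fun _ => K) with hS
  have himg : convexHull ℝ K = f '' S := by
    apply Set.Subset.antisymm
    · intro γ hγ
      obtain ⟨ι, hfin, z, w, hrange, haff, hpos, hsum, heq⟩ :=
        eq_pos_convex_span_of_mem_convexHull hγ
      have hcard : Fintype.card ι ≤ n := by
        calc Fintype.card ι ≤ Module.finrank ℝ ↥(vectorSpan ℝ (Set.range z)) + 1 :=
              haff.card_le_finrank_succ
          _ ≤ Module.finrank ℝ (X → ℝ) + 1 := by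
              have := Submodule.finrank_le (vectorSpan ℝ (Set.range z))
              omega
          _ = n := by rw [Module.finrank_fintype_fun_eq_card]
      set e : ι → Fin n := fun i => Fin.castLE hcard ((Fintype.equivFin ι) i) with he
      have hinj : Function.Injective e := fun a b hab => by
        apply (Fintype.equivFin ι).injective
        exact Fin.castLE_injective hcard hab
      set w' : Fin n → ℝ := Function.extend e w 0 with hw'
      set v' : Fin n → (X → ℝ) := Function.extend e z (fun _ => k0) with hv'
      have hw'e : ∀ i, w' (e i) = w i := fun i => hinj.extend_apply w 0 i
      have hv'e : ∀ i, v' (e i) = z i := fun i => hinj.extend_apply z _ i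
      have hw'0 : ∀ j, (¬∃ i, e i = j) → w' j = 0 := fun j h =>
        Function.extend_apply' _ _ _ h
      refine ⟨(w', v'), ⟨⟨fun j => ?_, ?_⟩, fun j _ => ?_⟩, ?_⟩
      · show 0 ≤ w' j
        by_cases h : ∃ i, e i = j
        · obtain ⟨i, rfl⟩ := h
          rw [hw'e i]; exact (hpos i).le
        · rw [hw'0 j h]
      · show ∑ j, w' j = 1
        rw [sum_extend_eq hinj w' hw'0]
        rw [Finset.sum_congr rfl fun i _ => hw'e i]
        exact hsum
      · show v' j ∈ K
        by_cases h : ∃ i, e i = j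
        · obtain ⟨i, rfl⟩ := h
          rw [hv'e i]; exact hrange ⟨i, rfl⟩
        · rw [hv']
          rw [Function.extend_apply' _ _ _ h]
          exact hk0
      · show (∑ j, w' j • v' j) = γ
        rw [sum_extend_eq hinj (fun j => w' j • v' j)
          (fun j h => by show w' j • v' j = 0; rw [hw'0 j h, zero_smul])]
        rw [Finset.sum_congr rfl fun i _ => by show w' (e i) • v' (e i) = w i • z i; rw [hw'e i, hv'e i]]
        exact heq
    · rintro _ ⟨⟨w, z⟩, ⟨hw, hz⟩, rfl⟩
      have hmem : Finset.univ.centerMass w z ∈ convexHull ℝ K :=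
        Finset.centerMass_mem_convexHull _ (fun i _ => hw.1 i)
          (by rw [hw.2]; norm_num) (fun i _ => hz i (Set.mem_univ i))
      rwa [Finset.centerMass_eq_of_sum_1 _ z hw.2] at hmem
  have hcont : Continuous f :=
    continuous_finset_sum _ fun i _ =>
      (((continuous_apply i).comp continuous_fst).smul
        ((continuous_apply i).comp continuous_snd))
  have hScomp : IsCompact S := IsCompact.prod (isCompact_stdSimplex (𝕜 := ℝ) (ι := Fin n)) (isCompact_univ_pi fun _ => hK)
  constructor
  · rw [himg]; exact hScomp.image hcont
  · intro γ hγ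
    rw [himg] at hγ
    obtain ⟨⟨w, z⟩, ⟨hw, hz⟩, rfl⟩ := hγ
    exact ⟨n, w, z, hw.1, hw.2, fun i => hz i (Set.mem_univ i), rfl⟩

/-- a monoentropic system whose set of pure states is closed is
sharp: (i) every pure state assigns probability 1 to some outcome, and (ii) for
every outcome there is at most one state assigning it probability 1, and any
such state is pure. -/
theorem monoentropic_closed_pure_implies_sharp {X : Type*} [Fintype X]
    (𝔄 : Set (Finset X)) (h𝔄 : 𝔄.Nonempty)
    (Ω : Set (X → ℝ)) (hconv : Convex ℝ Ω) (hcomp : IsCompact Ω)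
    (hstates : ∀ α ∈ Ω, IsState 𝔄 α)
    (hclosed : IsClosed (Ω.extremePoints ℝ))
    (hattain : ∀ α ∈ Ω, ∃ E ∈ 𝔄, measEnt 𝔄 α = locEnt E α)
    (hmono : ∀ α ∈ Ω, measEnt 𝔄 α = mixEnt Ω α) :
    (∀ α ∈ Ω.extremePoints ℝ, ∃ E ∈ 𝔄, ∃ x ∈ E, α x = 1) ∧
    (∀ E ∈ 𝔄, ∀ x ∈ E,
      (∀ α ∈ Ω, ∀ β ∈ Ω, α x = 1 → β x = 1 → α = β) ∧
      (∀ α ∈ Ω, α x = 1 → α ∈ Ω.extremePoints ℝ)) := by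
  classical
  -- basic state facts
  have hub : ∀ α ∈ Ω, ∀ E ∈ 𝔄, ∀ x ∈ E, α x ≤ 1 := by
    intro α hα E hE x hx
    have h := hstates α hα
    calc α x ≤ ∑ y ∈ E, α y := Finset.single_le_sum (fun y hy => h.1 E hE y hy) hx
      _ = 1 := h.2 E hE
  have hloc_nonneg : ∀ α ∈ Ω, ∀ E ∈ 𝔄, 0 ≤ locEnt E α := by
    intro α hα E hE
    exact Finset.sum_nonneg fun x hx =>
      ent_term_nonneg ((hstates α hα).1 E hE x hx) (hub α hα E hE x hx)
  have hmeas_nonneg : ∀ α ∈ Ω, 0 ≤ measEnt 𝔄 α := by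
    intro α hα
    apply le_csInf (h𝔄.image _)
    rintro b ⟨E, hE, rfl⟩
    exact hloc_nonneg α hα E hE
  have hmeas_zero : ∀ α ∈ Ω, ∀ E ∈ 𝔄, locEnt E α = 0 → measEnt 𝔄 α = 0 := by
    intro α hα E hE h0
    refine le_antisymm ?_ (hmeas_nonneg α hα)
    have hbdd : BddBelow ((fun E => locEnt E α) '' 𝔄) := by
      refine ⟨0, ?_⟩
      rintro b ⟨E', hE', rfl⟩
      exact hloc_nonneg α hα E' hE'
    have hle : measEnt 𝔄 α ≤ locEnt E α := csInf_le hbdd ⟨E, hE, rfl⟩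
    rw [h0] at hle
    exact hle
  -- the decomposition set
  set D : (X → ℝ) → Set ℝ := fun γ => {h : ℝ | ∃ (n : ℕ) (p : Fin n → ℝ) (v : Fin n → (X → ℝ)),
    (∀ i, 0 ≤ p i) ∧ (∑ i, p i = 1) ∧ (∀ i, v i ∈ Ω.extremePoints ℝ) ∧
    γ = ∑ i, p i • v i ∧ h = shannon p} with hD
  have hmixD : ∀ γ : X → ℝ, mixEnt Ω γ = sInf (D γ) := fun _ => rfl
  have hDlb : ∀ γ : X → ℝ, ∀ b ∈ D γ, (0:ℝ) ≤ b := by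
    rintro γ b ⟨n, p, v, h0, h1, hv, heq, rfl⟩
    exact shannon_nonneg h0 h1
  -- Krein-Milman + compact convex hulls
  set K := Ω.extremePoints ℝ with hKdef
  have hKsub : K ⊆ Ω := extremePoints_subset
  have hKcomp : IsCompact K := hcomp.of_isClosed_subset hclosed hKsub
  obtain ⟨hCHcomp, hrep⟩ := convexHull_compact_rep K hKcomp
  have hΩeq : Ω = convexHull ℝ K := by
    conv_lhs => rw [← closure_convexHull_extremePoints hcomp hconv]
    exact hCHcomp.isClosed.closure_eq
  obtain ⟨M, hM⟩ := isBounded_iff_forall_norm_le.mp hcomp.isBounded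
  -- key lemma: states with zero mixing entropy are extreme
  have hext_of_mix : ∀ γ ∈ Ω, mixEnt Ω γ = 0 → γ ∈ K := by
    intro γ hγ hmix
    have hγCH : γ ∈ convexHull ℝ K := hΩeq ▸ hγ
    have hDne : (D γ).Nonempty := by
      obtain ⟨n, p, v, h0, h1, hv, heq⟩ := hrep γ hγCH
      exact ⟨shannon p, n, p, v, h0, h1, hv, heq, rfl⟩
    have hM0 : 0 ≤ M := le_trans (norm_nonneg γ) (hM γ hγ)
    rw [← hclosed.closure_eq]
    rw [Metric.mem_closure_iff]
    intro δ hδ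
    set ε := δ / (2 * M + 1) with hε
    have hεpos : 0 < ε := div_pos hδ (by linarith)
    have hεδ : ε * (2 * M + 1) = δ := by
      rw [hε]; field_simp
    obtain ⟨h, hhD, hhlt⟩ := exists_lt_of_csInf_lt hDne
      (by rw [← hmixD γ, hmix]; exact hεpos)
    obtain ⟨n, p, v, h0, h1, hv, heq, rfl⟩ := hhD
    obtain ⟨j, hj⟩ := exists_big_weight h0 h1 hεpos hhlt
    refine ⟨v j, hv j, ?_⟩
    have hvΩ : ∀ i, v i ∈ Ω := fun i => hKsub (hv i)
    have hsub : γ - v j = ∑ i, p i • (v i - v j) := by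
      rw [heq]
      simp only [smul_sub]
      rw [Finset.sum_sub_distrib, ← Finset.sum_smul, h1, one_smul]
    rw [dist_eq_norm, hsub]
    have hbound1 : ‖∑ i, p i • (v i - v j)‖ ≤ ∑ i, p i * ‖v i - v j‖ := by
      refine (norm_sum_le _ _).trans_eq ?_
      refine Finset.sum_congr rfl fun i _ => ?_
      rw [norm_smul, Real.norm_eq_abs, abs_of_nonneg (h0 i)]
    have herase : ∑ i ∈ Finset.univ.erase j, p i = 1 - p j := by
      have := Finset.sum_erase_add Finset.univ p (Finset.mem_univ j)
      linarith [h1 ▸ this]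
    have hsplit : ∑ i, p i * ‖v i - v j‖ = ∑ i ∈ Finset.univ.erase j, p i * ‖v i - v j‖ := by
      rw [← Finset.sum_erase_add Finset.univ _ (Finset.mem_univ j)]
      simp
    have hbound2 : ∑ i ∈ Finset.univ.erase j, p i * ‖v i - v j‖ ≤ (1 - p j) * (2 * M) := by
      rw [← herase, Finset.sum_mul]
      apply Finset.sum_le_sum
      intro i _
      have hnorm : ‖v i - v j‖ ≤ 2 * M := by
        calc ‖v i - v j‖ ≤ ‖v i‖ + ‖v j‖ := norm_sub_le _ _
          _ ≤ M + M := add_le_add (hM _ (hvΩ i)) (hM _ (hvΩ j))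
          _ = 2 * M := by ring
      exact mul_le_mul_of_nonneg_left hnorm (h0 i)
    have hpj1 : 1 - p j ≤ ε := by linarith
    calc ‖∑ i, p i • (v i - v j)‖ ≤ ∑ i, p i * ‖v i - v j‖ := hbound1
      _ = ∑ i ∈ Finset.univ.erase j, p i * ‖v i - v j‖ := hsplit
      _ ≤ (1 - p j) * (2 * M) := hbound2
      _ ≤ ε * (2 * M) := mul_le_mul_of_nonneg_right hpj1 (by linarith)
      _ < ε * (2 * M + 1) := by nlinarith
      _ = δ := hεδ
  -- any state assigning probability one to an outcome of a test is extreme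
  have hpure : ∀ E ∈ 𝔄, ∀ x ∈ E, ∀ γ ∈ Ω, γ x = 1 → γ ∈ K := by
    intro E hE x hx γ hγ hγx
    have hst := hstates γ hγ
    have hzero : ∀ y ∈ E, y ≠ x → γ y = 0 := by
      intro y hy hyx
      have hsum : ∑ y ∈ E, γ y = 1 := hst.2 E hE
      have hesum : ∑ y ∈ E.erase x, γ y = 0 := by
        have h' := Finset.sum_erase_add E γ hx
        rw [hsum, hγx] at h'
        linarith
      have h0' := (Finset.sum_eq_zero_iff_of_nonneg
        (fun y hy => hst.1 E hE y (Finset.mem_of_mem_erase hy))).mp hesum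
      exact h0' y (Finset.mem_erase.mpr ⟨hyx, hy⟩)
    have hloc : locEnt E γ = 0 := by
      apply Finset.sum_eq_zero
      intro y hy
      by_cases h : y = x
      · subst h; rw [hγx]; simp
      · rw [hzero y hy h]; simp
    have hmeas := hmeas_zero γ hγ E hE hloc
    exact hext_of_mix γ hγ (by rw [← hmono γ hγ, hmeas])
  constructor
  · -- (i) every pure state assigns probability 1 to some outcome
    intro α hα
    have hαΩ : α ∈ Ω := hKsub hα
    have htrivmem : (0:ℝ) ∈ D α :=
      ⟨1, fun _ => 1, fun _ => α, fun _ => zero_le_one, by simp, fun _ => hα,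
        by simp, by simp [shannon]⟩
    have hmix0 : mixEnt Ω α = 0 := by
      rw [hmixD α]
      exact le_antisymm (csInf_le ⟨0, hDlb α⟩ htrivmem) (le_csInf ⟨0, htrivmem⟩ (hDlb α))
    have hme : measEnt 𝔄 α = 0 := by rw [hmono α hαΩ, hmix0]
    obtain ⟨E, hE, hEeq⟩ := hattain α hαΩ
    have hloc0 : locEnt E α = 0 := by rw [← hEeq, hme]
    refine ⟨E, hE, ?_⟩
    have hterm := (Finset.sum_eq_zero_iff_of_nonneg
      (fun y hy => ent_term_nonneg ((hstates α hαΩ).1 E hE y hy)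
        (hub α hαΩ E hE y hy))).mp hloc0
    by_contra hcon
    push_neg at hcon
    have hall0 : ∑ y ∈ E, α y = 0 := by
      apply Finset.sum_eq_zero
      intro y hy
      rcases ent_term_eq_zero ((hstates α hαΩ).1 E hE y hy)
        (by have := hterm y hy; linarith) with h | h
      · exact h
      · exact absurd h (hcon y hy)
    rw [(hstates α hαΩ).2 E hE] at hall0
    norm_num at hall0
  · -- (ii)
    intro E hE x hx
    refine ⟨?_, fun α hα h1 => hpure E hE x hx α hα h1⟩
    intro α hα β hβ hαx hβx
    set γ := (1/2 : ℝ) • α + (1/2 : ℝ) • β with hγdef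
    have hγΩ : γ ∈ Ω := hconv hα hβ (by norm_num) (by norm_num) (by norm_num)
    have hγx : γ x = 1 := by
      simp only [hγdef, Pi.add_apply, Pi.smul_apply, smul_eq_mul, hαx, hβx]
      norm_num
    have hγK := hpure E hE x hx γ hγΩ hγx
    have hseg : γ ∈ openSegment ℝ α β :=
      ⟨1/2, 1/2, by norm_num, by norm_num, by norm_num, rfl⟩
    have hfix := (mem_extremePoints.mp hγK).2 α hα β hβ hseg
    exact hfix.1.trans hfix.2.symm
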